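/- Suppose for every nontrivial additive character ψ of the finite field F_l one has |E[ψ(Z)]| ≤ C·|F_l|^{−α} for a random variable Z valued in F_l, with α > 0 and C ≥ 1. Let Z_1,...,Z_L be i.i.d. copies of Z and A ⊆ F_l a subset satisfying |Σ_{x∈A} ψ(−x)| ≤ |A|·|F_l|^{−β} for all nontrivial ψ, with β ≥ 0. Then |P(Z_1+...+Z_L ∈ A) − |A|/|F_l|| ≤ C^L · |A| · |F_l|^{−(Lα + β)} · (|F_l| − 1)/|F_l| ≤ C^L · |A|/|F_l| · |F_l|^{1 − Lα − β}. -/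

import Mathlib

open Finset

private lemma addChar_map_sum {Fl : Type} [AddCommGroup Fl] {ι : Type} (ψ : AddChar Fl ℂ)
    (s : Finset ι) (f : ι → Fl) : ψ (∑ i ∈ s, f i) = ∏ i ∈ s, ψ (f i) := by
  induction s using Finset.cons_induction with
  | empty => simp
  | cons a s ha ih => rw [Finset.sum_cons, Finset.prod_cons, AddChar.map_add_eq_mul, ih]

-- STATEMENT 14: Fourier-analytic bound for P(Z_1 + ... + Z_L ∈ A). The random variable
-- Z is modelled by a function on a finite uniform sample space Ω, with i.i.d. copies on Ω^L.
theorem stmt14 {Fl Ω : Type} [Field Fl] [Fintype Fl] [DecidableEq Fl]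
    [Fintype Ω] [Nonempty Ω] (Z : Ω → Fl) (L : ℕ) (hL : 1 ≤ L)
    (α β C : ℝ) (hα : 0 < α) (hβ : 0 ≤ β) (hC : 1 ≤ C)
    (hZ : ∀ ψ : AddChar Fl ℂ, ψ ≠ 0 →
      ‖(1 / (Fintype.card Ω : ℂ)) * ∑ ω : Ω, ψ (Z ω)‖ ≤
        C * (Fintype.card Fl : ℝ) ^ (-α))
    (A : Finset Fl)
    (hA : ∀ ψ : AddChar Fl ℂ, ψ ≠ 0 →
      ‖∑ x ∈ A, ψ (-x)‖ ≤ (A.card : ℝ) * (Fintype.card Fl : ℝ) ^ (-β)) :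
    |((Finset.univ.filter fun ω : Fin L → Ω => (∑ j, Z (ω j)) ∈ A).card : ℝ) /
          (Fintype.card Ω : ℝ) ^ L - (A.card : ℝ) / (Fintype.card Fl : ℝ)| ≤
        C ^ L * (A.card : ℝ) * (Fintype.card Fl : ℝ) ^ (-((L : ℝ) * α + β)) *
          ((Fintype.card Fl : ℝ) - 1) / (Fintype.card Fl : ℝ) ∧
      C ^ L * (A.card : ℝ) * (Fintype.card Fl : ℝ) ^ (-((L : ℝ) * α + β)) *
          ((Fintype.card Fl : ℝ) - 1) / (Fintype.card Fl : ℝ) ≤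
        C ^ L * (A.card : ℝ) / (Fintype.card Fl : ℝ) *
          (Fintype.card Fl : ℝ) ^ (1 - (L : ℝ) * α - β) := by
  classical
  set q : ℕ := Fintype.card Fl with hq
  set N : ℕ := Fintype.card Ω with hN
  have hq0 : 0 < q := Fintype.card_pos
  have hqR : (0 : ℝ) < (q : ℝ) := by exact_mod_cast hq0
  have hq1 : (1 : ℕ) ≤ q := hq0
  have hN0 : 0 < N := Fintype.card_pos
  have hNR : (0 : ℝ) < (N : ℝ) := by exact_mod_cast hN0
  set P : Finset (Fin L → Ω) := Finset.univ.filter fun ω => (∑ j, Z (ω j)) ∈ A with hP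
  set E : ℂ := ∑ ψ ∈ (Finset.univ \ {(0 : AddChar Fl ℂ)}), (∑ a ∈ A, ψ (-a)) *
      (∑ ω : Ω, ψ (Z ω)) ^ L with hE
  -- key orthogonality identity
  have key : (P.card : ℂ) * (q : ℂ) = (A.card : ℂ) * (N : ℂ) ^ L + E := by
    have hind : ∀ x a : Fl, ∑ ψ : AddChar Fl ℂ, ψ (x - a) = if x = a then (q : ℂ) else 0 := by
      intro x a
      rw [AddChar.sum_apply_eq_ite]
      simp [sub_eq_zero, hq]
    have step1 : (P.card : ℂ) * (q : ℂ)
        = ∑ ω : Fin L → Ω, ∑ a ∈ A, ∑ ψ : AddChar Fl ℂ, ψ ((∑ j, Z (ω j)) - a) := by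
      rw [hP, Finset.card_filter]
      push_cast
      rw [Finset.sum_mul]
      refine Finset.sum_congr rfl fun ω _ => ?_
      simp only [hind]
      rw [Finset.sum_ite_eq A (∑ j, Z (ω j)) fun _ => (q : ℂ)]
      split_ifs <;> simp
    have swap : (∑ ω : Fin L → Ω, ∑ a ∈ A, ∑ ψ : AddChar Fl ℂ, ψ ((∑ j, Z (ω j)) - a))
        = ∑ ψ : AddChar Fl ℂ, ∑ ω : Fin L → Ω, ∑ a ∈ A, ψ ((∑ j, Z (ω j)) - a) :=
      calc (∑ ω : Fin L → Ω, ∑ a ∈ A, ∑ ψ : AddChar Fl ℂ, ψ ((∑ j, Z (ω j)) - a))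
          = ∑ ω : Fin L → Ω, ∑ ψ : AddChar Fl ℂ, ∑ a ∈ A, ψ ((∑ j, Z (ω j)) - a) :=
            Finset.sum_congr rfl fun ω _ => Finset.sum_comm
        _ = _ := Finset.sum_comm
    have step2 : ∀ ψ : AddChar Fl ℂ,
        (∑ ω : Fin L → Ω, ∑ a ∈ A, ψ ((∑ j, Z (ω j)) - a))
          = (∑ a ∈ A, ψ (-a)) * (∑ ω : Ω, ψ (Z ω)) ^ L := by
      intro ψ
      have h1 : ∀ ω : Fin L → Ω, ∑ a ∈ A, ψ ((∑ j, Z (ω j)) - a)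
          = ψ (∑ j, Z (ω j)) * ∑ a ∈ A, ψ (-a) := by
        intro ω
        rw [Finset.mul_sum]
        exact Finset.sum_congr rfl fun a _ => by
          rw [sub_eq_add_neg, AddChar.map_add_eq_mul]
      rw [Finset.sum_congr rfl fun ω _ => h1 ω, ← Finset.sum_mul, mul_comm]
      congr 1
      rw [Fintype.sum_pow]
      exact Finset.sum_congr rfl fun ω _ => (addChar_map_sum ψ _ _)
    rw [step1, swap, Finset.sum_congr rfl fun ψ _ => step2 ψ]
    rw [← Finset.sum_sdiff (Finset.subset_univ {(0 : AddChar Fl ℂ)}), ← hE,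
      Finset.sum_singleton]
    simp only [AddChar.zero_apply, Finset.sum_const, nsmul_eq_mul, mul_one, Finset.card_univ]
    rw [← hN, add_comm]
  -- express the difference
  have hqC : (q : ℂ) ≠ 0 := by exact_mod_cast hqR.ne'
  have hNC : ((N : ℂ) ^ L) ≠ 0 := pow_ne_zero _ (by exact_mod_cast hNR.ne')
  have h : ((((P.card : ℝ) / (N : ℝ) ^ L - (A.card : ℝ) / (q : ℝ)) : ℝ) : ℂ)
      = E / ((q : ℂ) * (N : ℂ) ^ L) := by
    push_cast
    field_simp
    linear_combination key
  have habs : |(P.card : ℝ) / (N : ℝ) ^ L - (A.card : ℝ) / (q : ℝ)|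
      = ‖E‖ / ((q : ℝ) * (N : ℝ) ^ L) := by
    rw [← Real.norm_eq_abs, ← Complex.norm_real, h, norm_div, norm_mul, norm_pow]
    simp [Complex.norm_natCast]
  -- bound each term
  have hterm : ∀ ψ : AddChar Fl ℂ, ψ ≠ 0 →
      ‖(∑ a ∈ A, ψ (-a)) * (∑ ω : Ω, ψ (Z ω)) ^ L‖
        ≤ (A.card : ℝ) * (q : ℝ) ^ (-β) * ((N : ℝ) * (C * (q : ℝ) ^ (-α))) ^ L := by
    intro ψ hψ
    rw [norm_mul, norm_pow]
    have h1 := hA ψ hψ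
    have h2 : ‖∑ ω : Ω, ψ (Z ω)‖ ≤ (N : ℝ) * (C * (q : ℝ) ^ (-α)) := by
      have h3 := hZ ψ hψ
      rw [norm_mul, norm_div] at h3
      simp only [norm_one, Complex.norm_natCast] at h3
      rw [div_mul_eq_mul_div, one_mul, div_le_iff₀ hNR] at h3
      linarith [h3]
    have hnn : (0 : ℝ) ≤ ‖∑ ω : Ω, ψ (Z ω)‖ := by positivity
    exact mul_le_mul h1 (pow_le_pow_left₀ hnn h2 L) (by positivity) (by positivity)
  -- bound |E|
  have hcard : (Finset.univ \ {(0 : AddChar Fl ℂ)}).card = q - 1 := by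
    rw [Finset.card_sdiff_of_subset (Finset.subset_univ _), Finset.card_singleton, Finset.card_univ]
    rw [AddChar.card_eq]
  have hEbound : ‖E‖
      ≤ ((q : ℝ) - 1) * ((A.card : ℝ) * (q : ℝ) ^ (-β) * ((N : ℝ) * (C * (q : ℝ) ^ (-α))) ^ L) := by
    calc ‖E‖ ≤ ∑ ψ ∈ (Finset.univ \ {(0 : AddChar Fl ℂ)}),
          ‖(∑ a ∈ A, ψ (-a)) * (∑ ω : Ω, ψ (Z ω)) ^ L‖ :=
            norm_sum_le _ _
      _ ≤ ∑ _ψ ∈ (Finset.univ \ {(0 : AddChar Fl ℂ)}),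
          ((A.card : ℝ) * (q : ℝ) ^ (-β) * ((N : ℝ) * (C * (q : ℝ) ^ (-α))) ^ L) := by
            refine Finset.sum_le_sum fun ψ hψ => hterm ψ ?_
            simp only [Finset.mem_sdiff, Finset.mem_singleton] at hψ
            exact hψ.2
      _ = ((q : ℝ) - 1) * ((A.card : ℝ) * (q : ℝ) ^ (-β) * ((N : ℝ) * (C * (q : ℝ) ^ (-α))) ^ L) := by
            rw [Finset.sum_const, hcard, nsmul_eq_mul, Nat.cast_sub hq1]
            norm_num
  -- first bound
  have hrpow : ((N : ℝ) * (C * (q : ℝ) ^ (-α))) ^ L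
      = (N : ℝ) ^ L * C ^ L * (q : ℝ) ^ (-(α * (L : ℝ))) := by
    rw [mul_pow, mul_pow, ← Real.rpow_natCast ((q : ℝ) ^ (-α)) L, ← Real.rpow_mul hqR.le,
      neg_mul]
    ring
  have hexp : (q : ℝ) ^ (-β) * (q : ℝ) ^ (-(α * (L : ℝ))) = (q : ℝ) ^ (-((L : ℝ) * α + β)) := by
    rw [← Real.rpow_add hqR]
    congr 1
    ring
  have first : |(P.card : ℝ) / (N : ℝ) ^ L - (A.card : ℝ) / (q : ℝ)|
      ≤ C ^ L * (A.card : ℝ) * (q : ℝ) ^ (-((L : ℝ) * α + β)) * ((q : ℝ) - 1) / (q : ℝ) := by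
    rw [habs, div_le_div_iff₀ (by positivity) hqR]
    calc ‖E‖ * (q : ℝ)
        ≤ (((q : ℝ) - 1) * ((A.card : ℝ) * (q : ℝ) ^ (-β) * ((N : ℝ) * (C * (q : ℝ) ^ (-α))) ^ L))
          * (q : ℝ) := mul_le_mul_of_nonneg_right hEbound hqR.le
      _ = C ^ L * (A.card : ℝ) * (q : ℝ) ^ (-((L : ℝ) * α + β)) * ((q : ℝ) - 1)
          * ((q : ℝ) * (N : ℝ) ^ L) := by
            rw [hrpow, ← hexp]
            ring
  refine ⟨first, ?_⟩
  -- second bound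
  have h2exp : (q : ℝ) ^ (1 - (L : ℝ) * α - β) = (q : ℝ) ^ (-((L : ℝ) * α + β)) * (q : ℝ) := by
    have he : (1 : ℝ) - (L : ℝ) * α - β = -((L : ℝ) * α + β) + 1 := by ring
    rw [he, Real.rpow_add hqR, Real.rpow_one]
  rw [h2exp]
  have hq1R : (1 : ℝ) ≤ (q : ℝ) := by exact_mod_cast hq1
  rw [div_le_iff₀ hqR]
  calc C ^ L * (A.card : ℝ) * (q : ℝ) ^ (-((L : ℝ) * α + β)) * ((q : ℝ) - 1)
      ≤ C ^ L * (A.card : ℝ) * (q : ℝ) ^ (-((L : ℝ) * α + β)) * (q : ℝ) := by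
        gcongr
        linarith
    _ = C ^ L * (A.card : ℝ) / (q : ℝ) * ((q : ℝ) ^ (-((L : ℝ) * α + β)) * (q : ℝ)) * (q : ℝ) := by
        field_simp
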